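/- arXiv:2001.07397 — 2 statements merged into one kernel-verified Lean document; each statement's English description precedes it below -/
import Mathlib

section
/- A well-filtered T0 space is core-compact if and only if it is locally compact. -/
open Set

def RelCpt {X : Type*} [TopologicalSpace X] (A B : Set X) : Prop :=
  A ⊆ B ∧ ∀ 𝒰 : Set (Set X), (∀ U ∈ 𝒰, IsOpen U) → B ⊆ ⋃₀ 𝒰 →
    ∃ 𝒱 ⊆ 𝒰, 𝒱.Finite ∧ A ⊆ ⋃₀ 𝒱

def Saturated {X : Type*} [TopologicalSpace X] (A : Set X) : Prop :=
  A = ⋂₀ {U : Set X | IsOpen U ∧ A ⊆ U}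

def WellFiltered (X : Type*) [TopologicalSpace X] : Prop :=
  ∀ 𝒦 : Set (Set X), 𝒦.Nonempty →
    (∀ K ∈ 𝒦, IsCompact K ∧ Saturated K) →
    (∀ K₁ ∈ 𝒦, ∀ K₂ ∈ 𝒦, ∃ K₃ ∈ 𝒦, K₃ ⊆ K₁ ∧ K₃ ⊆ K₂) →
    ∀ U : Set X, IsOpen U → ⋂₀ 𝒦 ⊆ U → ∃ K ∈ 𝒦, K ⊆ U

def OmegaWellFiltered (X : Type*) [TopologicalSpace X] : Prop :=
  ∀ K : ℕ → Set X, (∀ n, IsCompact (K n) ∧ Saturated (K n)) →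
    (∀ m n : ℕ, ∃ k, K k ⊆ K m ∧ K k ⊆ K n) →
    ∀ U : Set X, IsOpen U → (⋂ n, K n) ⊆ U → ∃ n, K n ⊆ U

def SatWellFiltered (X : Type*) [TopologicalSpace X] : Prop :=
  ∀ 𝒜 : Set (Set X), 𝒜.Nonempty →
    (∀ A ∈ 𝒜, Saturated A) →
    (∀ A₁ ∈ 𝒜, ∀ A₂ ∈ 𝒜, ∃ A₃ ∈ 𝒜, RelCpt A₃ A₁ ∧ RelCpt A₃ A₂) →
    ∀ U : Set X, IsOpen U → ⋂₀ 𝒜 ⊆ U → ∃ A ∈ 𝒜, A ⊆ U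

def SatOmegaWellFiltered (X : Type*) [TopologicalSpace X] : Prop :=
  ∀ A : ℕ → Set X, (∀ n, Saturated (A n)) →
    (∀ m n : ℕ, ∃ k, RelCpt (A k) (A m) ∧ RelCpt (A k) (A n)) →
    ∀ U : Set X, IsOpen U → (⋂ n, A n) ⊆ U → ∃ n, A n ⊆ U

def OpenWellFiltered (X : Type*) [TopologicalSpace X] : Prop :=
  ∀ 𝒜 : Set (Set X), 𝒜.Nonempty →
    (∀ A ∈ 𝒜, IsOpen A) →
    (∀ A₁ ∈ 𝒜, ∀ A₂ ∈ 𝒜, ∃ A₃ ∈ 𝒜, RelCpt A₃ A₁ ∧ RelCpt A₃ A₂) →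
    ∀ U : Set X, IsOpen U → ⋂₀ 𝒜 ⊆ U → ∃ A ∈ 𝒜, A ⊆ U

def OpenOmegaWellFiltered (X : Type*) [TopologicalSpace X] : Prop :=
  ∀ A : ℕ → Set X, (∀ n, IsOpen (A n)) →
    (∀ m n : ℕ, ∃ k, RelCpt (A k) (A m) ∧ RelCpt (A k) (A n)) →
    ∀ U : Set X, IsOpen U → (⋂ n, A n) ⊆ U → ∃ n, A n ⊆ U

def CoreCompact (X : Type*) [TopologicalSpace X] : Prop :=
  ∀ (x : X) (U : Set X), IsOpen U → x ∈ U → ∃ V : Set X, IsOpen V ∧ x ∈ V ∧ RelCpt V U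

def Sober (X : Type*) [TopologicalSpace X] : Prop :=
  ∀ F : Set X, IsClosed F → F.Nonempty →
    (∀ F₁ F₂ : Set X, IsClosed F₁ → IsClosed F₂ → F ⊆ F₁ ∪ F₂ → F ⊆ F₁ ∨ F ⊆ F₂) →
    ∃! x : X, F = closure {x}

section Aux

variable {X : Type*} [TopologicalSpace X]

theorem relCpt_mono_left {A B C : Set X} (h : RelCpt B C) (hAB : A ⊆ B) : RelCpt A C := by
  refine ⟨hAB.trans h.1, fun 𝒰 h1 h2 => ?_⟩
  obtain ⟨𝒱, hs, hf, hc⟩ := h.2 𝒰 h1 h2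
  exact ⟨𝒱, hs, hf, hAB.trans hc⟩

theorem relCpt_mono_right {A B C : Set X} (h : RelCpt A B) (hBC : B ⊆ C) : RelCpt A C :=
  ⟨h.1.trans hBC, fun 𝒰 h1 h2 => h.2 𝒰 h1 (hBC.trans h2)⟩

/-- Interpolation for the way-below relation in a core-compact space. -/
theorem relCpt_interpolate (hcc : CoreCompact X) {V U : Set X} (hU : IsOpen U)
    (h : RelCpt V U) :
    ∃ W : Set X, IsOpen W ∧ V ⊆ W ∧ RelCpt V W ∧ RelCpt W U := by
  have hA : ∀ y : U, ∃ A : Set X, IsOpen A ∧ (y : X) ∈ A ∧ RelCpt A U := fun y =>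
    hcc y U hU y.2
  choose A hAo hAm hAU using hA
  have hB : ∀ y : U, ∃ B : Set X, IsOpen B ∧ (y : X) ∈ B ∧ RelCpt B (A y) := fun y =>
    hcc y (A y) (hAo y) (hAm y)
  choose B hBo hBm hBA using hB
  have hcov : U ⊆ ⋃₀ (Set.range B) := fun z hz => ⟨B ⟨z, hz⟩, ⟨⟨z, hz⟩, rfl⟩, hBm ⟨z, hz⟩⟩
  obtain ⟨𝒱, h𝒱sub, h𝒱fin, hV𝒱⟩ :=
    h.2 (Set.range B) (by rintro _ ⟨y, rfl⟩; exact hBo y) hcov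
  have hwit : ∀ S : 𝒱, ∃ y : U, B y = (S : Set X) := fun S => h𝒱sub S.2
  choose g hg using hwit
  haveI : Finite ↥𝒱 := h𝒱fin.to_subtype
  refine ⟨⋃ S : 𝒱, A (g S), isOpen_iUnion fun S => hAo _, ?_, ⟨?_, ?_⟩, ⟨?_, ?_⟩⟩
  · -- V ⊆ W
    intro v hv
    obtain ⟨S, hS, hvS⟩ := hV𝒱 hv
    refine mem_iUnion.2 ⟨⟨S, hS⟩, ?_⟩
    exact (hBA (g ⟨S, hS⟩)).1 (by rw [hg ⟨S, hS⟩]; exact hvS)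
  · -- V ⊆ W again (for RelCpt V W)
    intro v hv
    obtain ⟨S, hS, hvS⟩ := hV𝒱 hv
    refine mem_iUnion.2 ⟨⟨S, hS⟩, ?_⟩
    exact (hBA (g ⟨S, hS⟩)).1 (by rw [hg ⟨S, hS⟩]; exact hvS)
  · -- covers for RelCpt V W
    intro 𝒰 h1 h2
    have hsub : ∀ S : 𝒱, A (g S) ⊆ ⋃₀ 𝒰 := fun S =>
      (subset_iUnion (fun S : 𝒱 => A (g S)) S).trans h2
    have hfin : ∀ S : 𝒱, ∃ 𝒲 ⊆ 𝒰, 𝒲.Finite ∧ B (g S) ⊆ ⋃₀ 𝒲 := fun S =>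
      (hBA (g S)).2 𝒰 h1 (hsub S)
    choose 𝒲 h𝒲sub h𝒲fin h𝒲cov using hfin
    refine ⟨⋃ S : 𝒱, 𝒲 S, iUnion_subset h𝒲sub, Set.finite_iUnion h𝒲fin, ?_⟩
    intro v hv
    obtain ⟨S, hS, hvS⟩ := hV𝒱 hv
    have : v ∈ B (g ⟨S, hS⟩) := by rw [hg ⟨S, hS⟩]; exact hvS
    obtain ⟨T, hT, hvT⟩ := h𝒲cov ⟨S, hS⟩ this
    exact ⟨T, mem_iUnion.2 ⟨⟨S, hS⟩, hT⟩, hvT⟩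
  · -- W ⊆ U
    exact iUnion_subset fun S => (hAU (g S)).1
  · -- covers for RelCpt W U
    intro 𝒰 h1 h2
    have hfin : ∀ S : 𝒱, ∃ 𝒲 ⊆ 𝒰, 𝒲.Finite ∧ A (g S) ⊆ ⋃₀ 𝒲 := fun S =>
      (hAU (g S)).2 𝒰 h1 h2
    choose 𝒲 h𝒲sub h𝒲fin h𝒲cov using hfin
    refine ⟨⋃ S : 𝒱, 𝒲 S, iUnion_subset h𝒲sub, Set.finite_iUnion h𝒲fin, ?_⟩
    intro w hw
    obtain ⟨S, hwS⟩ := mem_iUnion.1 hw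
    obtain ⟨T, hT, hvT⟩ := h𝒲cov S hwS
    exact ⟨T, mem_iUnion.2 ⟨S, hT⟩, hvT⟩

/-- The "engine": if `W2` is relatively compact in `W1` and `𝒞` is a (downward)
directed family of closed sets each meeting `W2`, then the intersection meets `W1`. -/
theorem relcpt_engine {W1 W2 : Set X} (hrc : RelCpt W2 W1)
    {𝒞 : Set (Set X)} (h𝒞cl : ∀ C ∈ 𝒞, IsClosed C) (h𝒞ne : 𝒞.Nonempty)
    (hdir : ∀ C₁ ∈ 𝒞, ∀ C₂ ∈ 𝒞, ∃ C₃ ∈ 𝒞, C₃ ⊆ C₁ ∧ C₃ ⊆ C₂)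
    (hmeet : ∀ C ∈ 𝒞, (C ∩ W2).Nonempty) :
    ((⋂₀ 𝒞) ∩ W1).Nonempty := by
  rw [Set.nonempty_iff_ne_empty]
  intro hemp
  have hcov : W1 ⊆ ⋃₀ (compl '' 𝒞) := by
    intro x hx
    by_contra hx2
    have hxall : x ∈ ⋂₀ 𝒞 := by
      refine mem_sInter.2 fun C hC => ?_
      by_contra hxC
      exact hx2 ⟨Cᶜ, ⟨C, hC, rfl⟩, hxC⟩
    exact absurd hemp (Set.nonempty_iff_ne_empty.1 ⟨x, hxall, hx⟩)
  obtain ⟨𝒱, h𝒱sub, h𝒱fin, h𝒱cov⟩ := hrc.2 (compl '' 𝒞)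
    (by rintro _ ⟨C, hC, rfl⟩; exact (h𝒞cl C hC).isOpen_compl) hcov
  have hlb : ∀ (t : Set (Set X)), t.Finite → t ⊆ compl '' 𝒞 →
      ∃ C ∈ 𝒞, ∀ S ∈ t, S ⊆ Cᶜ := by
    intro t htf
    refine Set.Finite.induction_on
      (motive := fun t _ => t ⊆ compl '' 𝒞 → ∃ C ∈ 𝒞, ∀ S ∈ t, S ⊆ Cᶜ) t htf ?_ ?_
    · exact fun _ => h𝒞ne.imp fun C hC => ⟨hC, fun S hS => absurd hS (notMem_empty S)⟩
    · intro S₀ t' hS₀ ht' ih hsub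
      obtain ⟨C₀, hC₀, hC₀eq⟩ := hsub (mem_insert _ _)
      obtain ⟨C₁, hC₁, hC₁all⟩ := ih ((subset_insert _ _).trans hsub)
      obtain ⟨C₂, hC₂, h2a, h2b⟩ := hdir C₀ hC₀ C₁ hC₁
      refine ⟨C₂, hC₂, fun S hS => ?_⟩
      rcases mem_insert_iff.1 hS with rfl | hS'
      · rw [← hC₀eq]; exact compl_subset_compl.2 h2a
      · exact (hC₁all S hS').trans (compl_subset_compl.2 h2b)
  obtain ⟨Cm, hCm, hall⟩ := hlb 𝒱 h𝒱fin h𝒱sub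
  obtain ⟨x, hxC, hxW⟩ := hmeet Cm hCm
  obtain ⟨S, hS𝒱, hxS⟩ := h𝒱cov hxW
  exact (hall S hS𝒱 hxS) hxC

/-- The key lemma: in a well-filtered space, if `(W n)` is a decreasing chain of open
sets with `W (n+1)` way below `W n`, then any open set containing the intersection
contains one of the `W n`. -/
theorem nugget (hwf : WellFiltered X)
    (W : ℕ → Set X) (hop : ∀ n, IsOpen (W n)) (hrc : ∀ n, RelCpt (W (n+1)) (W n))
    {Ω : Set X} (hΩ : IsOpen Ω) (hsub : (⋂ n, W n) ⊆ Ω) : ∃ n, W n ⊆ Ω := by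
  by_contra hcon
  push_neg at hcon
  have hmono : ∀ {m n : ℕ}, m ≤ n → W n ⊆ W m := by
    intro m n h
    induction n, h using Nat.le_induction with
    | base => exact subset_rfl
    | succ n hmn ih => exact (hrc n).1.trans ih
  have hupper : ∀ {O : Set X}, IsOpen O → ∀ {a y : X}, a ∈ O → a ∈ closure {y} → y ∈ O := by
    intro O hO a y haO hay
    rcases (mem_closure_iff.1 hay) O hO haO with ⟨z, hzO, hz⟩
    rwa [mem_singleton_iff.1 hz] at hzO
  set ℱ : Set (Set X) := {C | IsClosed C ∧ C ⊆ Ωᶜ ∧ ∀ n, (C ∩ W n).Nonempty} with hℱdef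
  have hΩc : Ωᶜ ∈ ℱ := by
    refine ⟨hΩ.isClosed_compl, subset_rfl, fun n => ?_⟩
    obtain ⟨x, hxW, hxΩ⟩ := not_subset.1 (hcon n)
    exact ⟨x, hxΩ, hxW⟩
  have hzorn : ∀ c ⊆ ℱ, IsChain (· ⊆ ·) c → c.Nonempty → ∃ lb ∈ ℱ, ∀ s ∈ c, lb ⊆ s := by
    intro c hcS hchain hcne
    refine ⟨⋂₀ c, ⟨isClosed_sInter fun C hC => (hcS hC).1, ?_, fun n => ?_⟩,
      fun s hs => sInter_subset_of_mem hs⟩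
    · obtain ⟨C₀, hC₀⟩ := hcne
      exact (sInter_subset_of_mem hC₀).trans (hcS hC₀).2.1
    · refine relcpt_engine (hrc n) (fun C hC => (hcS hC).1) hcne ?_
        (fun C hC => (hcS hC).2.2 (n+1))
      intro C₁ h₁ C₂ h₂
      rcases hchain.total h₁ h₂ with h | h
      exacts [⟨C₁, h₁, subset_rfl, h⟩, ⟨C₂, h₂, h, subset_rfl⟩]
  obtain ⟨M, -, hMmin⟩ := zorn_superset_nonempty ℱ hzorn Ωᶜ hΩc
  have hM : M ∈ ℱ := hMmin.1
  have hMcl : IsClosed M := hM.1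
  have hMΩ : M ⊆ Ωᶜ := hM.2.1
  have hMW : ∀ n, (M ∩ W n).Nonempty := hM.2.2
  -- Step (N2): M is contained in the closure of every tail of every "selection".
  have key2 : ∀ (t : ℕ → X), (∀ m, t m ∈ M ∩ W m) → ∀ n,
      M ⊆ closure (t '' Set.Ici n) := by
    intro t ht n
    have hF : ∀ j, IsClosed (M ∩ closure (t '' Set.Ici j)) := fun j =>
      hMcl.inter isClosed_closure
    have hdec : ∀ {i j : ℕ}, i ≤ j →
        (M ∩ closure (t '' Set.Ici j)) ⊆ (M ∩ closure (t '' Set.Ici i)) :=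
      fun {i j} hij => inter_subset_inter_right _
        (closure_mono (image_mono (Set.Ici_subset_Ici.2 hij)))
    have hDF : (⋂ j, (M ∩ closure (t '' Set.Ici j))) ∈ ℱ := by
      refine ⟨isClosed_iInter hF, ?_, fun k => ?_⟩
      · exact (iInter_subset _ 0).trans (inter_subset_left.trans hMΩ)
      · have hEng := relcpt_engine (hrc k)
          (𝒞 := Set.range fun j => M ∩ closure (t '' Set.Ici j))
          (by rintro C ⟨j, rfl⟩; exact hF j) ⟨_, 0, rfl⟩
          (by rintro C₁ ⟨j₁, rfl⟩ C₂ ⟨j₂, rfl⟩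
              exact ⟨_, ⟨max j₁ j₂, rfl⟩, hdec (le_max_left _ _), hdec (le_max_right _ _)⟩)
          (by rintro C ⟨j, rfl⟩
              exact ⟨t (max j (k+1)), ⟨(ht _).1,
                subset_closure ⟨max j (k+1), Set.mem_Ici.2 (le_max_left _ _), rfl⟩⟩,
                hmono (le_max_right _ _) (ht _).2⟩)
        rwa [sInter_range] at hEng
    have hDM : (⋂ j, (M ∩ closure (t '' Set.Ici j))) ⊆ M :=
      (iInter_subset _ 0).trans inter_subset_left
    have hMD : M ⊆ ⋂ j, (M ∩ closure (t '' Set.Ici j)) := hMmin.2 hDF hDM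
    exact hMD.trans ((iInter_subset _ n).trans inter_subset_right)
  -- Step (N3'): every open set containing a point of M contains a full tail
  -- of every selection.
  have key3 : ∀ (t : ℕ → X), (∀ m, t m ∈ M ∩ W m) → ∀ {x : X}, x ∈ M →
      ∀ {O : Set X}, IsOpen O → x ∈ O → ∃ n, t '' Set.Ici n ⊆ O := by
    intro t ht x hxM O hO hxO
    by_contra hno
    push_neg at hno
    have hsel : ∀ k, ∃ m, k ≤ m ∧ t m ∉ O := by
      intro k
      obtain ⟨y, ⟨m, hm, rfl⟩, hyO⟩ := not_subset.1 (hno k)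
      exact ⟨m, hm, hyO⟩
    choose f hf1 hf2 using hsel
    have ht' : ∀ k, t (f k) ∈ M ∩ W k := fun k =>
      ⟨(ht (f k)).1, hmono (hf1 k) (ht (f k)).2⟩
    have hMO : M ⊆ Oᶜ := by
      refine (key2 (fun k => t (f k)) ht' 0).trans (closure_minimal ?_ (isClosed_compl_iff.2 hO))
      rintro y ⟨k, -, rfl⟩
      exact hf2 k
    exact (hMO hxM) hxO
  -- fix a selection
  choose s hs using hMW
  -- the compact saturated tail-hulls
  set K : ℕ → Set X := fun n => {y | ∃ m, n ≤ m ∧ s m ∈ closure {y}} with hKdef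
  have hsK : ∀ n m, n ≤ m → s m ∈ K n := fun n m h => ⟨m, h, subset_closure rfl⟩
  have hKup : ∀ {n : ℕ} {y y' : X}, y ∈ K n → y ∈ closure {y'} → y' ∈ K n := by
    rintro n y y' ⟨m, hm, hcl⟩ hyy'
    exact ⟨m, hm, (closure_minimal (singleton_subset_iff.2 hyy') isClosed_closure) hcl⟩
  have hKsat : ∀ n, Saturated (K n) := by
    intro n
    apply Set.Subset.antisymm
    · intro y hy
      exact mem_sInter.2 fun U hU => hU.2 hy
    · intro y hy
      by_contra hyK
      have hKU : K n ⊆ (closure {y})ᶜ := by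
        intro a ha
        by_contra ha2
        simp only [mem_compl_iff, not_not] at ha2
        exact hyK (hKup ha ha2)
      exact (mem_sInter.1 hy _ ⟨isClosed_closure.isOpen_compl, hKU⟩) (subset_closure rfl)
  have hKcpt : ∀ n, IsCompact (K n) := by
    intro n
    refine isCompact_of_finite_subcover fun {ι} Us hUs hcov => ?_
    haveI : DecidableEq ι := Classical.decEq ι
    obtain ⟨i₀, hi₀⟩ := mem_iUnion.1 (hcov (hsK n n le_rfl))
    obtain ⟨k, hk⟩ := key3 s hs (hs n).1 (hUs i₀) hi₀
    have hch : ∀ j : ℕ, ∃ i, n ≤ j → s j ∈ Us i := by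
      intro j
      by_cases hj : n ≤ j
      · obtain ⟨i, hi⟩ := mem_iUnion.1 (hcov (hsK n j hj))
        exact ⟨i, fun _ => hi⟩
      · exact ⟨i₀, fun h => absurd h hj⟩
    choose g hg using hch
    refine ⟨insert i₀ ((Finset.range k).image g), ?_⟩
    rintro y ⟨m, hnm, hcl⟩
    by_cases hmk : k ≤ m
    · exact mem_iUnion₂.2 ⟨i₀, Finset.mem_insert_self _ _,
        hupper (hUs i₀) (hk ⟨m, hmk, rfl⟩) hcl⟩
    · push_neg at hmk
      exact mem_iUnion₂.2 ⟨g m, Finset.mem_insert_of_mem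
        (Finset.mem_image_of_mem g (Finset.mem_range.2 hmk)), hupper (hUs (g m)) (hg m hnm) hcl⟩
  have hKdec : ∀ {a b : ℕ}, a ≤ b → K b ⊆ K a := by
    rintro a b hab y ⟨m, hm, hcl⟩
    exact ⟨m, hab.trans hm, hcl⟩
  have hnotsub : ¬ (⋂₀ (Set.range K) ⊆ Ω) := by
    intro hss
    obtain ⟨K', ⟨n, rfl⟩, hK'⟩ := hwf (Set.range K) ⟨K 0, 0, rfl⟩
      (by rintro _ ⟨n, rfl⟩; exact ⟨hKcpt n, hKsat n⟩)
      (by rintro _ ⟨a, rfl⟩ _ ⟨b, rfl⟩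
          exact ⟨K (max a b), ⟨max a b, rfl⟩, hKdec (le_max_left _ _),
            hKdec (le_max_right _ _)⟩)
      Ω hΩ hss
    exact (hMΩ (hs n).1) (hK' (hsK n n le_rfl))
  obtain ⟨y, hy𝒦, hyΩ⟩ := not_subset.1 hnotsub
  apply hyΩ
  apply hsub
  refine mem_iInter.2 fun n => ?_
  obtain ⟨m, hm, hcl⟩ := mem_sInter.1 hy𝒦 (K n) ⟨n, rfl⟩
  exact hupper (hop n) (hmono hm (hs m).2) hcl

end Aux

/-- A well-filtered space is core-compact iff it is locally compact. -/
theorem stmt13 (X : Type*) [TopologicalSpace X] [T0Space X] (hwf : WellFiltered X) :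
    CoreCompact X ↔
      ∀ (x : X) (U : Set X), IsOpen U → x ∈ U →
        ∃ W Q : Set X, IsOpen W ∧ IsCompact Q ∧ Saturated Q ∧ x ∈ W ∧ W ⊆ Q ∧ Q ⊆ U := by
  constructor
  · -- hard direction: core-compact → locally compact
    intro hcc x U hU hxU
    obtain ⟨V, hVo, hxV, hVU⟩ := hcc x U hU hxU
    have key : ∀ W : Set X, IsOpen W → RelCpt V W →
        ∃ W' : Set X, IsOpen W' ∧ V ⊆ W' ∧ RelCpt V W' ∧ RelCpt W' W := fun W hWo hVW =>
      relCpt_interpolate hcc hWo hVW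
    let T := {W : Set X // IsOpen W ∧ RelCpt V W}
    let t0 : T := ⟨U, hU, hVU⟩
    let step : T → T := fun t => ⟨Classical.choose (key t.1 t.2.1 t.2.2),
      (Classical.choose_spec (key t.1 t.2.1 t.2.2)).1,
      (Classical.choose_spec (key t.1 t.2.1 t.2.2)).2.2.1⟩
    let seq : ℕ → T := fun n => Nat.rec t0 (fun _ t => step t) n
    have hrc : ∀ n, RelCpt (seq (n + 1)).1 (seq n).1 := fun n =>
      (Classical.choose_spec (key (seq n).1 (seq n).2.1 (seq n).2.2)).2.2.2
    have hop : ∀ n, IsOpen (seq n).1 := fun n => (seq n).2.1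
    have hVsub : ∀ n, V ⊆ (seq n).1 := fun n => (seq n).2.2.1
    set Q := ⋂ n, (seq n).1 with hQdef
    have hQU : Q ⊆ U := iInter_subset (fun n => (seq n).1) 0
    have hVQ : V ⊆ Q := fun v hv => mem_iInter.2 fun n => hVsub n hv
    have hsat : Saturated Q := by
      apply subset_antisymm
      · intro y hy S hS
        exact hS.2 hy
      · intro y hy
        exact mem_iInter.2 fun n => hy (seq n).1 ⟨hop n, iInter_subset _ n⟩
    have hQC : IsCompact Q := by
      refine isCompact_of_finite_subcover fun {ι} Us hUs hcov => ?_
      obtain ⟨n, hn⟩ := nugget hwf (fun n => (seq n).1) hop hrc (isOpen_iUnion hUs) hcov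
      have hn' : (seq n).1 ⊆ ⋃₀ Set.range Us := by rwa [sUnion_range]
      obtain ⟨𝒱, h𝒱sub, h𝒱fin, h𝒱cov⟩ :=
        (hrc n).2 (Set.range Us) (by rintro _ ⟨i, rfl⟩; exact hUs i) hn'
      have hwit : ∀ S : 𝒱, ∃ i, Us i = (S : Set X) := fun S => h𝒱sub S.2
      choose f hf using hwit
      haveI : Finite ↥𝒱 := h𝒱fin.to_subtype
      have hfin : (Set.range f).Finite := Set.finite_range f
      refine ⟨hfin.toFinset, ?_⟩
      intro y hy
      have hy' : y ∈ (seq (n + 1)).1 := iInter_subset (fun n => (seq n).1) (n + 1) hy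
      obtain ⟨S, hS, hyS⟩ := h𝒱cov hy'
      refine mem_iUnion₂.2 ⟨f ⟨S, hS⟩, hfin.mem_toFinset.2 ⟨⟨S, hS⟩, rfl⟩, ?_⟩
      rw [hf ⟨S, hS⟩]; exact hyS
    exact ⟨V, Q, hVo, hQC, hsat, hxV, hVQ, hQU⟩
  · -- easy direction: locally compact → core-compact
    intro h x U hU hxU
    obtain ⟨W, Q, hWo, hQc, _hQs, hxW, hWQ, hQU⟩ := h x U hU hxU
    refine ⟨W, hWo, hxW, hWQ.trans hQU, fun 𝒰 h1 h2 => ?_⟩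
    have hQcov : Q ⊆ ⋃ i ∈ 𝒰, i := by
      rw [← sUnion_eq_biUnion]; exact hQU.trans h2
    obtain ⟨t, hts, htf, htc⟩ := hQc.elim_finite_subcover_image h1 hQcov
    refine ⟨t, hts, htf, ?_⟩
    rw [sUnion_eq_biUnion]
    exact hWQ.trans htc
end

section
/- Let P = J ∪ ℕ be the poset of Example 4. For Scott open sets U, V of P, U ≪ V (in the Scott topology) if and only if U = ∅. Consequently the Scott space of P is an open well-filtered space. -/
open Set

abbrev JJ : Type := ℕ × WithTop ℕ
abbrev PP : Type := JJ ⊕ ℕ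

/-- The order on `J = ℕ × (ℕ ∪ {ω})` (Johnstone's dcpo). -/
def jle (a b : JJ) : Prop :=
  (a.1 = b.1 ∧ a.2 ≤ b.2) ∨ (b.2 = ⊤ ∧ a.2 ≤ (b.1 : WithTop ℕ))

/-- The order on `P = J ∪ ℕ`. -/
def ple : PP → PP → Prop
  | Sum.inl a, Sum.inl b => jle a b
  | Sum.inr m, Sum.inr n => m ≤ n
  | Sum.inr m, Sum.inl b => b = (m, (⊤ : WithTop ℕ))
  | Sum.inl _, Sum.inr _ => False

def dirP (D : Set PP) : Prop :=
  D.Nonempty ∧ ∀ a ∈ D, ∀ b ∈ D, ∃ c ∈ D, ple a c ∧ ple b c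

def isLubP (D : Set PP) (s : PP) : Prop :=
  (∀ d ∈ D, ple d s) ∧ ∀ b : PP, (∀ d ∈ D, ple d b) → ple s b

def scottOpenP (U : Set PP) : Prop :=
  (∀ x ∈ U, ∀ y : PP, ple x y → y ∈ U) ∧
  ∀ D : Set PP, dirP D → ∀ s : PP, isLubP D s → s ∈ U → (D ∩ U).Nonempty

/-- The Scott topology on `P`. -/
def scottTopP : TopologicalSpace PP where
  IsOpen := scottOpenP
  isOpen_univ := by
    refine ⟨fun _ _ _ _ => trivial, fun D hD _ _ _ => hD.1.imp fun d hd => ⟨hd, trivial⟩⟩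
  isOpen_inter := by
    rintro U V ⟨hUu, hUd⟩ ⟨hVu, hVd⟩
    refine ⟨fun x hx y hxy => ⟨hUu x hx.1 y hxy, hVu x hx.2 y hxy⟩, ?_⟩
    intro D hD s hs hsUV
    obtain ⟨d₁, hd₁D, hd₁U⟩ := hUd D hD s hs hsUV.1
    obtain ⟨d₂, hd₂D, hd₂V⟩ := hVd D hD s hs hsUV.2
    obtain ⟨c, hcD, hc₁, hc₂⟩ := hD.2 d₁ hd₁D d₂ hd₂D
    exact ⟨c, hcD, hUu d₁ hd₁U c hc₁, hVu d₂ hd₂V c hc₂⟩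
  isOpen_sUnion := by
    intro S hS
    constructor
    · rintro x ⟨t, htS, hxt⟩ y hxy
      exact ⟨t, htS, (hS t htS).1 x hxt y hxy⟩
    · rintro D hD s hs ⟨t, htS, hst⟩
      obtain ⟨d, hdD, hdt⟩ := (hS t htS).2 D hD s hs hst
      exact ⟨d, hdD, t, htS, hdt⟩

section Aux

open Classical

/-- The column `{(a, j) : j ∈ ℕ}`. -/
def colD (a : ℕ) : Set PP := {x | ∃ j : ℕ, x = Sum.inl (a, (j : WithTop ℕ))}

lemma dir_colD (a : ℕ) : dirP (colD a) := by
  refine ⟨⟨Sum.inl (a, ((0:ℕ) : WithTop ℕ)), ⟨0, rfl⟩⟩, ?_⟩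
  rintro _ ⟨j, rfl⟩ _ ⟨k, rfl⟩
  exact ⟨Sum.inl (a, ((max j k : ℕ) : WithTop ℕ)), ⟨max j k, rfl⟩,
    Or.inl ⟨rfl, by simpa using le_max_left j k⟩,
    Or.inl ⟨rfl, by simpa using le_max_right j k⟩⟩

lemma lub_colD (a : ℕ) : isLubP (colD a) (Sum.inl (a, (⊤ : WithTop ℕ))) := by
  constructor
  · rintro _ ⟨j, rfl⟩; exact Or.inl ⟨rfl, le_top⟩
  · intro b hb
    match b with
    | Sum.inr m => exact absurd (hb _ ⟨0, rfl⟩) (by simp [ple])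
    | Sum.inl (c, t) =>
      cases t with
      | top =>
        have h1 : jle (a, ((c+1 : ℕ) : WithTop ℕ)) (c, ⊤) := hb _ ⟨c+1, rfl⟩
        rcases h1 with ⟨hac, _⟩ | ⟨_, hle⟩
        · exact Or.inl ⟨hac, le_rfl⟩
        · exfalso
          have hle' : ((c+1 : ℕ) : WithTop ℕ) ≤ (c : WithTop ℕ) := hle
          have h2 : (c+1 : ℕ) ≤ c := by exact_mod_cast hle'
          omega
      | coe n =>
        have h1 : jle (a, ((n+1 : ℕ) : WithTop ℕ)) (c, (n : WithTop ℕ)) := hb _ ⟨n+1, rfl⟩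
        rcases h1 with ⟨_, hle⟩ | ⟨htop, _⟩
        · exfalso
          have hle' : ((n+1 : ℕ) : WithTop ℕ) ≤ (n : WithTop ℕ) := hle
          have h2 : (n+1 : ℕ) ≤ n := by exact_mod_cast hle'
          omega
        · exact absurd (show ((n:WithTop ℕ)) = ⊤ from htop) (by simp)

lemma mem_top_of_fin {U : Set PP} (hU : scottOpenP U) {a j : ℕ}
    (h : Sum.inl (a, (j : WithTop ℕ)) ∈ U) {k : ℕ} (hk : j ≤ k) :
    Sum.inl (k, (⊤ : WithTop ℕ)) ∈ U :=
  hU.1 _ h _ (Or.inr ⟨rfl, by simpa using hk⟩)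

lemma fin_of_top {U : Set PP} (hU : scottOpenP U) {a : ℕ}
    (h : Sum.inl (a, (⊤ : WithTop ℕ)) ∈ U) :
    ∃ j : ℕ, Sum.inl (a, (j : WithTop ℕ)) ∈ U := by
  obtain ⟨d, hdD, hdU⟩ := hU.2 _ (dir_colD a) _ (lub_colD a) h
  obtain ⟨j, rfl⟩ := hdD
  exact ⟨j, hdU⟩

lemma exists_fin_ge {U : Set PP} (hU : scottOpenP U) (hne : U.Nonempty) (n : ℕ) :
    ∃ a : ℕ, n ≤ a ∧ ∃ j : ℕ, Sum.inl (a, (j : WithTop ℕ)) ∈ U := by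
  have hfin : ∃ a j : ℕ, Sum.inl (a, (j : WithTop ℕ)) ∈ U := by
    obtain ⟨x, hx⟩ := hne
    match x with
    | Sum.inr m =>
      have hm : Sum.inl (m, (⊤ : WithTop ℕ)) ∈ U :=
        hU.1 _ hx _ (show ((m, (⊤ : WithTop ℕ)) : JJ) = (m, ⊤) from rfl)
      exact ⟨m, fin_of_top hU hm⟩
    | Sum.inl (a, t) =>
      cases t with
      | top => exact ⟨a, fin_of_top hU hx⟩
      | coe j => exact ⟨a, j, hx⟩
  obtain ⟨a, j, hj⟩ := hfin
  exact ⟨max n j, le_max_left _ _, fin_of_top hU (mem_top_of_fin hU hj (le_max_right _ _))⟩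

/-- The open set determined by `g : ℕ → ℕ`. -/
def Og (g : ℕ → ℕ) : Set PP :=
  {x | ∀ (a : ℕ) (b : WithTop ℕ), x = Sum.inl (a, b) → (g a : WithTop ℕ) ≤ b}

lemma og_open (g : ℕ → ℕ) : scottOpenP (Og g) := by
  constructor
  · intro x hx y hxy a b hy
    subst hy
    match x with
    | Sum.inr m =>
      have h : ((a, b) : JJ) = (m, ⊤) := hxy
      have hb : b = ⊤ := (Prod.mk.injEq _ _ _ _ ▸ h).2
      rw [hb]; exact le_top
    | Sum.inl (c, d) =>
      rcases hxy with ⟨hc, hd⟩ | ⟨hb, _⟩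
      · have hc' : c = a := hc
        subst hc'
        exact le_trans (hx c d rfl) hd
      · rw [show b = ⊤ from hb]; exact le_top
  · intro D hD s hs hsU
    match s with
    | Sum.inr m =>
      obtain ⟨d, hd⟩ := hD.1
      refine ⟨d, hd, ?_⟩
      have hdm := hs.1 d hd
      match d with
      | Sum.inr k => intro a b h; cases h
      | Sum.inl p => exact absurd hdm (by simp [ple])
    | Sum.inl (a, t) =>
      cases t with
      | coe n =>
        -- s = (a, n) with n finite; show s ∈ D
        have hall : ∀ d ∈ D, ∃ e : ℕ, d = Sum.inl (a, (e : WithTop ℕ)) ∧ e ≤ n := by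
          intro d hd
          have hds := hs.1 d hd
          match d with
          | Sum.inr k =>
            have h : ((a, (n : WithTop ℕ)) : JJ) = (k, ⊤) := hds
            exact absurd (Prod.mk.injEq _ _ _ _ ▸ h).2 (by simp)
          | Sum.inl (c, e) =>
            rcases hds with ⟨hc, he⟩ | ⟨htop, _⟩
            · have hc' : c = a := hc
              have he' : e ≤ (n : WithTop ℕ) := he
              subst hc'
              lift e to ℕ using (fun h => by rw [h] at he'; simp at he')
              exact ⟨e, rfl, WithTop.coe_le_coe.mp he'⟩
            · exact absurd (show ((n:WithTop ℕ)) = ⊤ from htop) (by simp)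
        by_cases hmem : Sum.inl (a, (n : WithTop ℕ)) ∈ D
        · exact ⟨_, hmem, hsU⟩
        · exfalso
          have hlt : ∀ d ∈ D, ∃ e : ℕ, d = Sum.inl (a, (e : WithTop ℕ)) ∧ e < n := by
            intro d hd
            obtain ⟨e, rfl, hle⟩ := hall d hd
            refine ⟨e, rfl, lt_of_le_of_ne hle fun h => hmem ?_⟩
            rwa [← h]
          obtain ⟨d0, hd0⟩ := hD.1
          obtain ⟨e0, _, he0⟩ := hlt d0 hd0
          have hn : 0 < n := Nat.pos_of_ne_zero fun h => by omega
          have hub : ∀ d ∈ D, ple d (Sum.inl (a, ((n-1 : ℕ) : WithTop ℕ))) := by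
            intro d hd
            obtain ⟨e, rfl, hlt'⟩ := hlt d hd
            exact Or.inl ⟨rfl, by simpa using by omega⟩
          have hsle := hs.2 _ hub
          rcases hsle with ⟨_, hle⟩ | ⟨htop, _⟩
          · have : (n : WithTop ℕ) ≤ ((n-1 : ℕ) : WithTop ℕ) := hle
            exact absurd this (by simpa using by omega)
          · exact absurd (show (((n-1:ℕ)):WithTop ℕ) = ⊤ from htop) (by simp)
      | top =>
        -- s = (a, ⊤)
        by_cases h1 : ∃ d ∈ D, (∃ m, d = Sum.inr m) ∨ ∃ c, d = Sum.inl (c, (⊤ : WithTop ℕ))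
        · obtain ⟨d, hd, hm | hc⟩ := h1
          · obtain ⟨m, rfl⟩ := hm
            exact ⟨_, hd, fun a' b' h => by cases h⟩
          · obtain ⟨c, rfl⟩ := hc
            refine ⟨_, hd, fun a' b' h => ?_⟩
            have := (Prod.mk.injEq _ _ _ _ ▸ (Sum.inl.injEq _ _ ▸ h)).2
            rw [← this]; exact le_top
        · push_neg at h1
          have hform : ∀ d ∈ D, ∃ c e : ℕ, d = Sum.inl (c, (e : WithTop ℕ)) := by
            intro d hd
            match d with
            | Sum.inr m => exact absurd rfl ((h1 _ hd).1 m)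
            | Sum.inl (c, t) =>
              cases t with
              | top => exact absurd rfl ((h1 _ hd).2 c)
              | coe e => exact ⟨c, e, rfl⟩
          obtain ⟨d0, hd0⟩ := hD.1
          obtain ⟨c0, e0, hd0eq⟩ := hform d0 hd0
          subst hd0eq
          have hcol : ∀ d ∈ D, ∃ e : ℕ, d = Sum.inl (c0, (e : WithTop ℕ)) := by
            intro d hd
            obtain ⟨c, e, rfl⟩ := hform d hd
            obtain ⟨d₃, hd₃, h₃₁, h₃₂⟩ := hD.2 _ hd0 _ hd
            obtain ⟨c₃, e₃, rfl⟩ := hform d₃ hd₃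
            have hc0 : c0 = c₃ := by
              rcases h₃₁ with ⟨hc, _⟩ | ⟨htop, _⟩
              · exact hc
              · exact absurd (show ((e₃:WithTop ℕ)) = ⊤ from htop) (by simp)
            have hc : c = c₃ := by
              rcases h₃₂ with ⟨hc, _⟩ | ⟨htop, _⟩
              · exact hc
              · exact absurd (show ((e₃:WithTop ℕ)) = ⊤ from htop) (by simp)
            exact ⟨e, by rw [hc, ← hc0]⟩
          by_contra hno
          have hbd : ∀ d ∈ D, ∃ e : ℕ, d = Sum.inl (c0, (e : WithTop ℕ)) ∧ e < g c0 := by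
            intro d hd
            obtain ⟨e, rfl⟩ := hcol d hd
            refine ⟨e, rfl, ?_⟩
            by_contra hge
            push_neg at hge
            refine hno ⟨_, hd, fun a' b' h => ?_⟩
            obtain ⟨h1', h2'⟩ := Prod.mk.injEq _ _ _ _ ▸ (Sum.inl.injEq _ _ ▸ h)
            rw [← h1', ← h2']
            exact_mod_cast hge
          have hub : ∀ d ∈ D, ple d (Sum.inl (c0, ((g c0 : ℕ) : WithTop ℕ))) := by
            intro d hd
            obtain ⟨e, rfl, hlt'⟩ := hbd d hd
            exact Or.inl ⟨rfl, by simpa using by omega⟩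
          have hsle := hs.2 _ hub
          rcases hsle with ⟨_, hle⟩ | ⟨htop, _⟩
          · exact absurd (show (⊤ : WithTop ℕ) ≤ ((g c0 : ℕ) : WithTop ℕ) from hle) (by simp)
          · exact absurd (show (((g c0:ℕ)):WithTop ℕ) = ⊤ from htop) (by simp)

end Aux

/-- For Scott open subsets `U, V` of `P`, `U ≪ V` iff `U = ∅`; consequently the Scott
space of `P` is open well-filtered. -/
theorem stmt17 :
    (∀ U V : Set PP, scottOpenP U → scottOpenP V →
      (@RelCpt PP scottTopP U V ↔ U = ∅)) ∧
    @OpenWellFiltered PP scottTopP := by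
  classical
  have key : ∀ U V : Set PP, scottOpenP U → scottOpenP V →
      (@RelCpt PP scottTopP U V ↔ U = ∅) := by
    intro U V hU hV
    constructor
    · rintro ⟨hUV, hcov⟩
      by_contra hne'
      have hne : U.Nonempty := Set.nonempty_iff_ne_empty.mpr hne'
      set f : ℕ → ℕ := fun a => sInf {j : ℕ | Sum.inl (a, (j : WithTop ℕ)) ∈ U} with hf
      set 𝒰 : Set (Set PP) := {S | ∃ g : ℕ → ℕ, {a : ℕ | g a ≤ f a}.Finite ∧ S = Og g}
        with h𝒰
      have hopen : ∀ S ∈ 𝒰, @IsOpen PP scottTopP S := by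
        rintro S ⟨g, _, rfl⟩; exact og_open g
      have hcover : V ⊆ ⋃₀ 𝒰 := by
        intro x _
        match x with
        | Sum.inr m =>
          exact ⟨Og (fun c => f c + 1), ⟨_, by simp, rfl⟩, fun a b h => by cases h⟩
        | Sum.inl (a, t) =>
          cases t with
          | top =>
            refine ⟨Og (fun c => f c + 1), ⟨_, by simp, rfl⟩, fun a' b' h => ?_⟩
            have := (Prod.mk.injEq _ _ _ _ ▸ (Sum.inl.injEq _ _ ▸ h)).2
            rw [← this]; exact le_top
          | coe b =>
            refine ⟨Og (fun c => if c = a then 0 else f c + 1),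
              ⟨_, Set.Finite.subset (Set.finite_singleton a) ?_, rfl⟩, fun a' b' h => ?_⟩
            · intro c hc
              have hc' : (if c = a then 0 else f c + 1) ≤ f c := hc
              by_cases hca : c = a
              · simp [hca]
              · rw [if_neg hca] at hc'
                omega
            · obtain ⟨h1', h2'⟩ := Prod.mk.injEq _ _ _ _ ▸ (Sum.inl.injEq _ _ ▸ h)
              rw [← h1', ← h2']
              simp
      obtain ⟨𝒱, h𝒱𝒰, h𝒱fin, hU𝒱⟩ := hcov 𝒰 hopen hcover
      have hch : ∀ S ∈ 𝒱, ∃ g : ℕ → ℕ, {a : ℕ | g a ≤ f a}.Finite ∧ S = Og g :=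
        fun S hS => h𝒱𝒰 hS
      choose! g hgfin hgeq using hch
      have h𝒱fin' : 𝒱.Finite := h𝒱fin
      have := h𝒱fin'.to_subtype
      set T : Set ℕ := ⋃ S : 𝒱, {a : ℕ | g S.1 a ≤ f a} with hT
      have hTfin : T.Finite := Set.finite_iUnion fun S => hgfin S.1 S.2
      obtain ⟨B, hB⟩ := hTfin.bddAbove
      obtain ⟨a, ha, j, hj⟩ := exists_fin_ge hU hne (B + 1)
      have hfa : Sum.inl (a, ((f a : ℕ) : WithTop ℕ)) ∈ U := by
        have h' : ({j : ℕ | Sum.inl (a, (j : WithTop ℕ)) ∈ U}).Nonempty := ⟨j, hj⟩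
        simpa only [hf, Set.mem_setOf_eq] using Nat.sInf_mem h'
      obtain ⟨S, hS, hmemS⟩ := hU𝒱 hfa
      have hle : (g S a : WithTop ℕ) ≤ ((f a : ℕ) : WithTop ℕ) := by
        rw [hgeq S hS] at hmemS
        exact hmemS a _ rfl
      have haT : a ∈ T := Set.mem_iUnion.mpr ⟨⟨S, hS⟩, by exact_mod_cast hle⟩
      have := hB haT
      omega
    · rintro rfl
      exact ⟨Set.empty_subset _, fun 𝒰 _ _ =>
        ⟨∅, Set.empty_subset _, Set.finite_empty, by simp⟩⟩
  refine ⟨key, ?_⟩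
  intro 𝒜 hne hopen hfilt U hUopen hsub
  obtain ⟨A, hA⟩ := hne
  obtain ⟨A₃, hA₃, h1, _⟩ := hfilt A hA A hA
  have h3 : A₃ = ∅ := (key A₃ A (hopen _ hA₃) (hopen _ hA)).mp h1
  exact ⟨A₃, hA₃, by simp [h3]⟩
end
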